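/- Let (a,c) ∈ ℕ^k × ℕ^k satisfy the Wishart matching condition, and let n_+(a,c) be the number of positions i ∈ {1,...,2k} such that the i-th element of the matching list appears at least 4 times in the list. Then n_+(a,c) ≤ 4(k + 1 − (#a + #c)). -/

import Mathlib

/-- The cyclic Wishart list of `2k` couples
`(a₁,c₁), (a₂,c₁), (a₂,c₂), (a₃,c₂), …, (a_k,c_k), (a₁,c_k)`,
indexed by `Fin k × Bool`: position `(i, false)` carries `(aᵢ, cᵢ)` and
position `(i, true)` carries `(aᵢ₊₁, cᵢ)` (indices mod `k`). -/
def wlist {k : ℕ} [NeZero k] (a c : Fin k → ℕ) (q : Fin k × Bool) : ℕ × ℕ :=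
  if q.2 then (a (q.1 + 1), c q.1) else (a q.1, c q.1)

/-- The Wishart matching condition: every couple appears an even number of times
in the Wishart list. -/
def WishartMatching {k : ℕ} [NeZero k] (a c : Fin k → ℕ) : Prop :=
  ∀ p : ℕ × ℕ, Even (Nat.card {q : Fin k × Bool // wlist a c q = p})

/-- `#a`, the number of distinct values among the coordinates of `a`. -/
def numDistinct {k : ℕ} (a : Fin k → ℕ) : ℕ := (Finset.univ.image a).card

/-- `d_W(a,c)`, the number of distinct couples in the Wishart list. -/
def dW {k : ℕ} [NeZero k] (a c : Fin k → ℕ) : ℕ :=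
  (Finset.univ.image (wlist a c)).card

/-- `n₊(a,c)`: the number of positions whose couple appears at least 4 times in
the Wishart list. -/
noncomputable def nPlus {k : ℕ} [NeZero k] (a c : Fin k → ℕ) : ℕ :=
  Nat.card {q : Fin k × Bool //
    4 ≤ Nat.card {q' : Fin k × Bool // wlist a c q' = wlist a c q}}

private def wpos {k : ℕ} (q : Fin k × Bool) : ℕ :=
  2 * (q.1 : ℕ) + (if q.2 then 1 else 0)

lemma wishart_key {k : ℕ} [NeZero k] (a c : Fin k → ℕ) :
    numDistinct a + numDistinct c ≤ dW a c + 1 := by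
  classical
  have hA : ∀ v : ℕ, (∃ i, a i = v) →
      ∃ q : Fin k × Bool, (wlist a c q).1 = v ∧
        ∀ q', (wlist a c q').1 = v → wpos q ≤ wpos q' := by
    rintro v ⟨i, hi⟩
    obtain ⟨q, hq, hmin⟩ := Finset.exists_min_image
      (Finset.univ.filter fun q => (wlist a c q).1 = v) wpos
      ⟨(i, false), Finset.mem_filter.mpr ⟨Finset.mem_univ _, by simp [wlist, hi]⟩⟩
    refine ⟨q, (Finset.mem_filter.mp hq).2, fun q' hq' => hmin q' ?_⟩
    simp [hq']
  have hC : ∀ w : ℕ, (∃ i, c i = w) →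
      ∃ q : Fin k × Bool, (wlist a c q).2 = w ∧
        ∀ q', (wlist a c q').2 = w → wpos q ≤ wpos q' := by
    rintro w ⟨i, hi⟩
    obtain ⟨q, hq, hmin⟩ := Finset.exists_min_image
      (Finset.univ.filter fun q => (wlist a c q).2 = w) wpos
      ⟨(i, false), Finset.mem_filter.mpr ⟨Finset.mem_univ _, by simp [wlist, hi]⟩⟩
    refine ⟨q, (Finset.mem_filter.mp hq).2, fun q' hq' => hmin q' ?_⟩
    simp [hq']
  choose! qA hA1 hA2 using hA
  choose! qC hC1 hC2 using hC
  have hAodd : ∀ v, v ≠ a 0 → (∃ i, a i = v) → (qA v).2 = true := by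
    intro v hv0 hv
    rcases hq : qA v with ⟨i, b⟩
    cases b with
    | true => rfl
    | false =>
      exfalso
      have h1 : a i = v := by
        have := hA1 v hv; rw [hq] at this; simpa [wlist] using this
      have hi0 : i ≠ 0 := fun h => hv0 (by rw [← h1, h])
      have h5 : 1 ≤ (i : ℕ) := Nat.pos_of_ne_zero (fun h => hi0 (Fin.ext (by simpa using h)))
      have hk2 : 2 ≤ k := by have := i.isLt; omega
      set j : Fin k := ⟨(i : ℕ) - 1, by have := i.isLt; omega⟩ with hj
      have hj1 : j + 1 = i := by
        apply Fin.ext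
        rw [Fin.add_def]
        have h1k : ((1 : Fin k) : ℕ) = 1 := by
          rw [Fin.val_one']; exact Nat.mod_eq_of_lt hk2
        rw [h1k]
        show ((i : ℕ) - 1 + 1) % k = (i : ℕ)
        rw [Nat.sub_add_cancel h5, Nat.mod_eq_of_lt i.isLt]
      have h2 : (wlist a c (j, true)).1 = v := by simp [wlist, hj1, h1]
      have h3 := hA2 v hv _ h2
      rw [hq] at h3
      simp [wpos] at h3
      have hjv : (j : ℕ) = (i : ℕ) - 1 := rfl
      omega
  have hCeven : ∀ w, (∃ i, c i = w) → (qC w).2 = false := by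
    intro w hw
    rcases hq : qC w with ⟨i, b⟩
    cases b with
    | false => rfl
    | true =>
      exfalso
      have h1 : c i = w := by
        have := hC1 w hw; rw [hq] at this; simpa [wlist] using this
      have h2 : (wlist a c (i, false)).2 = w := by simp [wlist, h1]
      have h3 := hC2 w hw _ h2
      rw [hq] at h3
      simp [wpos] at h3
  set S : Finset (ℕ ⊕ ℕ) :=
    (((Finset.univ.image a).erase (a 0)).disjSum (Finset.univ.image c)) with hS
  have hinj : Set.InjOn (Sum.elim (fun v => wlist a c (qA v)) (fun w => wlist a c (qC w)))
      (S : Set (ℕ ⊕ ℕ)) := by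
    rintro (v | w) hx (v' | w') hy hg
    · have hv : ∃ i, a i = v := by
        have := (Finset.mem_erase.mp (Finset.inl_mem_disjSum.mp (Finset.mem_coe.mp hx))).2
        obtain ⟨i, -, hi⟩ := Finset.mem_image.mp this
        exact ⟨i, hi⟩
      have hv' : ∃ i, a i = v' := by
        have := (Finset.mem_erase.mp (Finset.inl_mem_disjSum.mp (Finset.mem_coe.mp hy))).2
        obtain ⟨i, -, hi⟩ := Finset.mem_image.mp this
        exact ⟨i, hi⟩
      have : v = v' := by
        rw [← hA1 v hv, ← hA1 v' hv']
        simp only [Sum.elim_inl] at hg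
        rw [hg]
      rw [this]
    · exfalso
      have hmem := Finset.mem_erase.mp (Finset.inl_mem_disjSum.mp (Finset.mem_coe.mp hx))
      have hv0 : v ≠ a 0 := hmem.1
      have hv : ∃ i, a i = v := by
        obtain ⟨i, -, hi⟩ := Finset.mem_image.mp hmem.2; exact ⟨i, hi⟩
      have hw : ∃ i, c i = w' := by
        obtain ⟨i, -, hi⟩ := Finset.mem_image.mp (Finset.inr_mem_disjSum.mp (Finset.mem_coe.mp hy))
        exact ⟨i, hi⟩
      simp only [Sum.elim_inl, Sum.elim_inr] at hg
      have p1 : wpos (qA v) ≤ wpos (qC w') :=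
        hA2 v hv _ (by rw [← hg]; exact hA1 v hv)
      have p2 : wpos (qC w') ≤ wpos (qA v) :=
        hC2 w' hw _ (by rw [hg]; exact hC1 w' hw)
      have hb1 := hAodd v hv0 hv
      have hb2 := hCeven w' hw
      simp [wpos, hb1, hb2] at p1 p2
      omega
    · exfalso
      have hmem := Finset.mem_erase.mp (Finset.inl_mem_disjSum.mp (Finset.mem_coe.mp hy))
      have hv0 : v' ≠ a 0 := hmem.1
      have hv : ∃ i, a i = v' := by
        obtain ⟨i, -, hi⟩ := Finset.mem_image.mp hmem.2; exact ⟨i, hi⟩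
      have hw : ∃ i, c i = w := by
        obtain ⟨i, -, hi⟩ := Finset.mem_image.mp (Finset.inr_mem_disjSum.mp (Finset.mem_coe.mp hx))
        exact ⟨i, hi⟩
      simp only [Sum.elim_inl, Sum.elim_inr] at hg
      have p1 : wpos (qA v') ≤ wpos (qC w) :=
        hA2 v' hv _ (by rw [hg]; exact hA1 v' hv)
      have p2 : wpos (qC w) ≤ wpos (qA v') :=
        hC2 w hw _ (by rw [← hg]; exact hC1 w hw)
      have hb1 := hAodd v' hv0 hv
      have hb2 := hCeven w hw
      simp [wpos, hb1, hb2] at p1 p2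
      omega
    · have hw : ∃ i, c i = w := by
        obtain ⟨i, -, hi⟩ := Finset.mem_image.mp (Finset.inr_mem_disjSum.mp (Finset.mem_coe.mp hx))
        exact ⟨i, hi⟩
      have hw' : ∃ i, c i = w' := by
        obtain ⟨i, -, hi⟩ := Finset.mem_image.mp (Finset.inr_mem_disjSum.mp (Finset.mem_coe.mp hy))
        exact ⟨i, hi⟩
      have : w = w' := by
        rw [← hC1 w hw, ← hC1 w' hw']
        simp only [Sum.elim_inr] at hg
        rw [hg]
      rw [this]
  have hmaps : ∀ x ∈ S, Sum.elim (fun v => wlist a c (qA v)) (fun w => wlist a c (qC w)) x ∈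
      Finset.univ.image (wlist a c) := by
    rintro (v | w) hx
    · exact Finset.mem_image_of_mem _ (Finset.mem_univ _)
    · exact Finset.mem_image_of_mem _ (Finset.mem_univ _)
  have hcard := Finset.card_le_card_of_injOn _ hmaps hinj
  have h0 : a 0 ∈ Finset.univ.image a := Finset.mem_image_of_mem a (Finset.mem_univ 0)
  have h1 : 1 ≤ numDistinct a := Finset.card_pos.mpr ⟨a 0, h0⟩
  rw [hS, Finset.card_disjSum, Finset.card_erase_of_mem h0] at hcard
  unfold numDistinct dW at *
  omega

private lemma ncard_subtype_eq {α : Type*} [Fintype α] (p : α → Prop) [DecidablePred p] :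
    Nat.card {x // p x} = (Finset.univ.filter p).card := by
  rw [Nat.card_eq_fintype_card, Fintype.card_subtype]

private def wmult {k : ℕ} [NeZero k] (a c : Fin k → ℕ) (p : ℕ × ℕ) : ℕ :=
  (Finset.univ.filter fun q => wlist a c q = p).card


/-- If `(a,c)` satisfies the Wishart matching condition then
`n₊(a,c) ≤ 4 (k + 1 − (#a + #c))`. -/
theorem wishart_nPlus_bound {k : ℕ} [NeZero k] (a c : Fin k → ℕ)
    (h : WishartMatching a c) :
    nPlus a c ≤ 4 * (k + 1 - (numDistinct a + numDistinct c)) := by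
  classical
  set E : Finset (ℕ × ℕ) := Finset.univ.image (wlist a c) with hE
  set E4 : Finset (ℕ × ℕ) := E.filter (fun p => 4 ≤ wmult a c p) with hE4
  set E2 : Finset (ℕ × ℕ) := E.filter (fun p => ¬ 4 ≤ wmult a c p) with hE2
  have hEven : ∀ p, Even (wmult a c p) := by
    intro p
    have := h p
    rwa [ncard_subtype_eq] at this
  have hnp : nPlus a c = (Finset.univ.filter fun q => 4 ≤ wmult a c (wlist a c q)).card := by
    unfold nPlus
    rw [ncard_subtype_eq]
    refine congrArg Finset.card (Finset.filter_congr fun q _ => ?_)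
    rw [ncard_subtype_eq]
    exact Iff.rfl
  have hsum : 2 * k = ∑ p ∈ E, wmult a c p := by
    have := Finset.card_eq_sum_card_fiberwise
      (fun q (_ : q ∈ (Finset.univ : Finset (Fin k × Bool))) =>
        Finset.mem_image_of_mem (wlist a c) (Finset.mem_univ q))
    rw [hE]
    unfold wmult
    rw [← this]
    simp [Finset.card_univ, mul_comm]
  have hsplit : ∑ p ∈ E, wmult a c p = ∑ p ∈ E4, wmult a c p + ∑ p ∈ E2, wmult a c p :=
    (Finset.sum_filter_add_sum_filter_not E _ _).symm
  have hE2two : ∀ p ∈ E2, wmult a c p = 2 := by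
    intro p hp
    obtain ⟨hpE, hp4⟩ := Finset.mem_filter.mp hp
    obtain ⟨q, -, hq⟩ := Finset.mem_image.mp hpE
    have h1 : 0 < wmult a c p :=
      Finset.card_pos.mpr ⟨q, Finset.mem_filter.mpr ⟨Finset.mem_univ q, hq⟩⟩
    obtain ⟨r, hr⟩ := hEven p
    omega
  have hsum2 : ∑ p ∈ E2, wmult a c p = 2 * E2.card := by
    rw [Finset.sum_congr rfl hE2two]
    simp [mul_comm]
  have hsum4 : 4 * E4.card ≤ ∑ p ∈ E4, wmult a c p := by
    have := Finset.card_nsmul_le_sum E4 (wmult a c) 4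
      (fun p hp => (Finset.mem_filter.mp hp).2)
    simpa [mul_comm] using this
  have hnp2 : (Finset.univ.filter fun q => 4 ≤ wmult a c (wlist a c q)).card
      = ∑ p ∈ E4, wmult a c p := by
    rw [Finset.card_eq_sum_card_fiberwise (f := wlist a c) (t := E4)
      (fun q hq => by
        have h4 := (Finset.mem_filter.mp hq).2
        exact Finset.mem_filter.mpr
          ⟨Finset.mem_image_of_mem _ (Finset.mem_univ q), h4⟩)]
    refine Finset.sum_congr rfl fun p hp => ?_
    have hp4 := (Finset.mem_filter.mp hp).2
    refine congrArg Finset.card ?_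
    ext q
    simp only [Finset.mem_filter, Finset.mem_univ, true_and]
    constructor
    · rintro ⟨-, hq⟩; exact hq
    · intro hq; exact ⟨by rw [hq]; exact hp4, hq⟩
  have hd : E4.card + E2.card = E.card := Finset.card_filter_add_card_filter_not _
  have hkey := wishart_key a c
  have hdW : dW a c = E.card := rfl
  rw [hnp, hnp2]
  omega
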